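/- The sequence i ↦ R_i + α_i (for 1 ≤ i ≤ n−1) is nondecreasing, and the sequence i ↦ −R_{i+1} + α_i (for 1 ≤ i ≤ n−1) is nonincreasing. -/

import Mathlib

/-!
Combinatorial setting abstracting a good BONG over a dyadic local field.
`R : ℕ → ℤ` are the orders `R_i = ord a_i` (indices `1,…,n` used),
`d : ℕ → EReal` are the values `d_j = d(-a_j a_{j+1}) ∈ ℕ ∪ {∞}`
(the allowed values are encoded in condition (G3) below).
-/

/-- The term `(R_{i+1} - R_i)/2 + e` appearing in the definition of `α_i`. -/
noncomputable def halfTerm (e : ℤ) (R : ℕ → ℤ) (i : ℕ) : EReal :=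
  (((R (i + 1) - R i : ℝ) / 2 + (e : ℝ) : ℝ) : EReal)

/-- The set whose minimum defines `α_i`. -/
noncomputable def alphaSet (e : ℤ) (n : ℕ) (R : ℕ → ℤ) (d : ℕ → EReal) (i : ℕ) :
    Set EReal :=
  {halfTerm e R i}
    ∪ {x | ∃ j, 1 ≤ j ∧ j ≤ i ∧ x = ((R (i + 1) - R j : ℝ) : EReal) + d j}
    ∪ {x | ∃ j, i ≤ j ∧ j + 1 ≤ n ∧ x = ((R (j + 1) - R i : ℝ) : EReal) + d j}

/-- The invariant `α_i = α_i(L)`, for `1 ≤ i ≤ n - 1`. -/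
noncomputable def alpha (e : ℤ) (n : ℕ) (R : ℕ → ℤ) (d : ℕ → EReal) (i : ℕ) : EReal :=
  sInf (alphaSet e n R d i)

/-- `α'_m(k,l)`: the `α`-invariant of the truncated data `R_k,…,R_l`, `d_k,…,d_{l-1}`. -/
noncomputable def alphaT (e : ℤ) (R : ℕ → ℤ) (d : ℕ → EReal) (k l m : ℕ) : EReal :=
  alpha e (l - k + 1) (fun j => R (k + j - 1)) (fun j => d (k + j - 1)) m

/-- Conditions (G1)-(G4) on the data `(e, n, R, d)`, abstracting a good BONG. -/
structure GoodBONG (e : ℤ) (n : ℕ) (R : ℕ → ℤ) (d : ℕ → EReal) : Prop where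
  he : 1 ≤ e
  hn : 2 ≤ n
  g1 : ∀ i, 1 ≤ i → i + 2 ≤ n → R i ≤ R (i + 2)
  g2a : ∀ j, 1 ≤ j → j + 1 ≤ n → 0 ≤ R (j + 1) - R j + 2 * e
  g2b : ∀ j, 1 ≤ j → j + 1 ≤ n → 0 ≤ ((R (j + 1) - R j : ℝ) : EReal) + d j
  g3 : ∀ j, 1 ≤ j → j + 1 ≤ n →
    d j = 0 ∨ (∃ m : ℕ, Odd m ∧ (m : ℤ) ≤ 2 * e - 1 ∧ d j = ((m : ℝ) : EReal)) ∨
      d j = (((2 * e : ℤ) : ℝ) : EReal) ∨ d j = ⊤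
  g4odd : ∀ j, 1 ≤ j → j + 1 ≤ n → Odd (R (j + 1) - R j) →
    0 < R (j + 1) - R j ∧ d j = 0
  g4even : ∀ j, 1 ≤ j → j + 1 ≤ n → Even (R (j + 1) - R j) → 0 < d j

lemma le_add_sInf (c : ℝ) (S : Set EReal) (a : EReal) (h : ∀ x ∈ S, a ≤ (c:EReal) + x) :
    a ≤ (c:EReal) + sInf S := by
  rw [add_comm, ← EReal.sub_le_iff_le_add (.inl (EReal.coe_ne_bot c)) (.inl (EReal.coe_ne_top c))]
  refine le_sInf fun x hx => ?_
  rw [EReal.sub_le_iff_le_add (.inl (EReal.coe_ne_bot c)) (.inl (EReal.coe_ne_top c)), add_comm]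
  exact h x hx

lemma coe_add_coe_add (a b : ℝ) (x : EReal) :
    (a : EReal) + ((b : EReal) + x) = ((a + b : ℝ) : EReal) + x := by
  rw [← add_assoc, ← EReal.coe_add]

lemma step1 (e : ℤ) (n : ℕ) (R : ℕ → ℤ) (d : ℕ → EReal) (i : ℕ)
    (h1 : 1 ≤ i) (h2 : i + 2 ≤ n) (hg1 : R i ≤ R (i + 2)) :
    ((R i : ℝ) : EReal) + alpha e n R d i ≤ ((R (i+1) : ℝ) : EReal) + alpha e n R d (i+1) := by
  have key : ∀ x ∈ alphaSet e n R d (i+1),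
      alpha e n R d i ≤ (((R (i+1) - R i : ℤ) : ℝ) : EReal) + x := by
    intro x hx
    have hg1' : (R i : ℝ) ≤ (R (i+2) : ℝ) := by exact_mod_cast hg1
    rcases hx with (hx | ⟨j, hj1, hj2, hjx⟩) | ⟨j, hj1, hj2, hjx⟩
    · -- half term
      refine le_trans (sInf_le (Or.inl (Or.inl rfl))) ?_
      subst hx
      unfold halfTerm
      rw [← EReal.coe_add, EReal.coe_le_coe_iff]
      push_cast
      linarith
    · -- second family of S_{i+1}
      rcases Nat.lt_or_ge i j with hij | hij
      · -- j = i + 1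
        have hji : j = i + 1 := le_antisymm hj2 hij
        subst hji hjx
        rw [coe_add_coe_add]
        refine sInf_le (Or.inr ⟨i+1, Nat.le_succ i, ?_, ?_⟩)
        · omega
        · norm_num
      · -- j ≤ i
        subst hjx
        rw [coe_add_coe_add]
        refine le_trans (sInf_le (Or.inl (Or.inr ⟨j, hj1, hij, rfl⟩)))
          (add_le_add_left ?_ (d j))
        rw [EReal.coe_le_coe_iff]; push_cast; linarith
    · -- third family of S_{i+1}
      subst hjx
      rw [coe_add_coe_add]
      refine sInf_le (Or.inr ⟨j, le_trans (Nat.le_succ i) hj1, hj2, ?_⟩)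
      norm_num
  refine le_add_sInf _ _ _ (fun x hx => ?_)
  have hk := add_le_add_right (key x hx) ((R i : ℝ) : EReal)
  rw [coe_add_coe_add] at hk
  have h3 : ((R i : ℝ) + ((R (i+1) - R i : ℤ):ℝ)) = (R (i+1) : ℝ) := by push_cast; ring
  rw [h3] at hk
  exact hk

lemma step2 (e : ℤ) (n : ℕ) (R : ℕ → ℤ) (d : ℕ → EReal) (i : ℕ)
    (h1 : 1 ≤ i) (h2 : i + 2 ≤ n) (hg1 : R i ≤ R (i + 2)) :
    (((-R (i+2) : ℤ) : ℝ) : EReal) + alpha e n R d (i+1) ≤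
      (((-R (i+1) : ℤ) : ℝ) : EReal) + alpha e n R d i := by
  have key : ∀ y ∈ alphaSet e n R d i,
      alpha e n R d (i+1) ≤ (((R (i+2) - R (i+1) : ℤ) : ℝ) : EReal) + y := by
    intro y hy
    have hg1' : (R i : ℝ) ≤ (R (i+2) : ℝ) := by exact_mod_cast hg1
    rcases hy with (hy | ⟨j, hj1, hj2, hjy⟩) | ⟨j, hj1, hj2, hjy⟩
    · -- half term
      refine le_trans (sInf_le (Or.inl (Or.inl rfl))) ?_
      subst hy
      unfold halfTerm
      rw [← EReal.coe_add, EReal.coe_le_coe_iff]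
      push_cast
      linarith
    · -- second family of S_i, j ≤ i
      subst hjy
      rw [coe_add_coe_add]
      refine sInf_le (Or.inl (Or.inr ⟨j, hj1, le_trans hj2 (Nat.le_succ i), ?_⟩))
      norm_num
    · -- third family of S_i, i ≤ j
      rcases Nat.lt_or_ge i j with hij | hij
      · -- i + 1 ≤ j
        subst hjy
        rw [coe_add_coe_add]
        refine le_trans (sInf_le (Or.inr ⟨j, hij, hj2, rfl⟩))
          (add_le_add_left ?_ (d j))
        rw [EReal.coe_le_coe_iff]; push_cast; linarith
      · -- j = i
        have hji : j = i := le_antisymm hij hj1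
        subst hji hjy
        rw [coe_add_coe_add]
        refine sInf_le (Or.inl (Or.inr ⟨j, h1, Nat.le_succ j, ?_⟩))
        norm_num
  refine le_add_sInf _ _ _ (fun y hy => ?_)
  have hk := add_le_add_right (key y hy) (((-R (i+2) : ℤ) : ℝ) : EReal)
  rw [coe_add_coe_add] at hk
  have h3 : (((-R (i+2) : ℤ) : ℝ) + ((R (i+2) - R (i+1) : ℤ):ℝ)) = ((-R (i+1) : ℤ) : ℝ) := by
    push_cast; ring
  rw [h3] at hk
  exact hk

/-- `i ↦ R_i + α_i` is nondecreasing and `i ↦ -R_{i+1} + α_i` is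
nonincreasing, for `1 ≤ i ≤ n-1`. -/
theorem stmt1 (e : ℤ) (n : ℕ) (R : ℕ → ℤ) (d : ℕ → EReal)
    (h : GoodBONG e n R d) :
    ∀ i j, 1 ≤ i → i ≤ j → j + 1 ≤ n →
      ((R i : ℝ) : EReal) + alpha e n R d i ≤ ((R j : ℝ) : EReal) + alpha e n R d j ∧
      (((-R (j + 1) : ℤ) : ℝ) : EReal) + alpha e n R d j ≤
        (((-R (i + 1) : ℤ) : ℝ) : EReal) + alpha e n R d i := by
  intro i j hi hij hjn
  induction j with
  | zero => omega
  | succ k ih =>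
    rcases Nat.lt_or_ge i (k+1) with hlt | hge
    · have hik : i ≤ k := by omega
      have hk1 : 1 ≤ k := le_trans hi hik
      obtain ⟨ha, hb⟩ := ih hik (by omega)
      have hg1 := h.g1 k hk1 (by omega)
      exact ⟨le_trans ha (step1 e n R d k hk1 (by omega) hg1),
        le_trans (step2 e n R d k hk1 (by omega) hg1) hb⟩
    · have hik : i = k+1 := by omega
      subst hik
      exact ⟨le_refl _, le_refl _⟩
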